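/- Let d ≥ 2 and let ρ and σ be density matrices of dimension d. Then with ε := T(ρ,σ) the trace distance, the von Neumann entropies satisfy |S(ρ) − S(σ)| ≤ h(ε) + ε·log₂(d−1), where h(ε) := −ε·log₂ ε − (1−ε)·log₂(1−ε) (with 0·log₂ 0 := 0). -/

import Mathlib

open Matrix BigOperators ComplexOrder

section AudenaertHelpers
open Real Finset

variable {d : ℕ}


lemma negMulLog_sum_le {ι : Type*} (T : Finset ι) (f : ι → ℝ) (hf : ∀ i ∈ T, 0 ≤ f i) :
    Real.negMulLog (∑ i ∈ T, f i) ≤ ∑ i ∈ T, Real.negMulLog (f i) := by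
  have hS : Real.negMulLog (∑ i ∈ T, f i) = ∑ i ∈ T, (-(f i) * Real.log (∑ j ∈ T, f j)) := by
    rw [Real.negMulLog, ← Finset.sum_neg_distrib, Finset.sum_mul]
  rw [hS]
  apply Finset.sum_le_sum
  intro i hi
  rw [Real.negMulLog]
  rcases eq_or_lt_of_le (hf i hi) with h0 | h0
  · simp [← h0]
  · have hle : f i ≤ ∑ j ∈ T, f j := Finset.single_le_sum hf hi
    have := Real.log_le_log h0 hle
    nlinarith



-- Jensen for negMulLog
lemma sum_mul_negMulLog_le {ι : Type*} (T : Finset ι) (w x : ι → ℝ)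
    (hw0 : ∀ i ∈ T, 0 ≤ w i) (hw1 : ∑ i ∈ T, w i = 1) (hx0 : ∀ i ∈ T, 0 ≤ x i) :
    ∑ i ∈ T, w i * Real.negMulLog (x i) ≤ Real.negMulLog (∑ i ∈ T, w i * x i) := by
  have := Real.concaveOn_negMulLog.le_map_sum (t := T) (w := w) (p := x) hw0 hw1
    (fun i hi => Set.mem_Ici.mpr (hx0 i hi))
  simpa [smul_eq_mul] using this

-- Jensen for binEntropy
lemma sum_mul_binEntropy_le {ι : Type*} (T : Finset ι) (w x : ι → ℝ)
    (hw0 : ∀ i ∈ T, 0 ≤ w i) (hw1 : ∑ i ∈ T, w i = 1)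
    (hx0 : ∀ i ∈ T, x i ∈ Set.Icc (0:ℝ) 1) :
    ∑ i ∈ T, w i * Real.binEntropy (x i) ≤ Real.binEntropy (∑ i ∈ T, w i * x i) := by
  have := Real.strictConcave_binEntropy.concaveOn.le_map_sum (t := T) (w := w) (p := x) hw0 hw1 hx0
  simpa [smul_eq_mul] using this



-- grouping bound
lemma entropy_grouping (d : ℕ) (hd : 2 ≤ d) (p : Fin d → ℝ) (hp0 : ∀ i, 0 ≤ p i)
    (hp1 : ∑ i, p i = 1) (j : Fin d) :
    ∑ i, Real.negMulLog (p i) ≤ Real.qaryEntropy d (1 - p j) := by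
  set T : Finset (Fin d) := Finset.univ.erase j with hT
  have hcard : (T.card : ℝ) = (d : ℝ) - 1 := by
    rw [hT, Finset.card_erase_of_mem (Finset.mem_univ j)]
    simp [Finset.card_univ]
    have : 1 ≤ d := by omega
    push_cast [Nat.cast_sub this]
    ring
  have hd1 : (0:ℝ) < (d:ℝ) - 1 := by
    have : (2:ℝ) ≤ (d:ℝ) := by exact_mod_cast hd
    linarith
  set e : ℝ := 1 - p j with he
  have hesum : ∑ i ∈ T, p i = e := by
    have := Finset.add_sum_erase Finset.univ p (Finset.mem_univ j)
    rw [hp1] at this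
    rw [he, hT]; linarith
  have he0 : 0 ≤ e := by
    rw [← hesum]; exact Finset.sum_nonneg (fun i _ => hp0 i)
  set c : ℝ := ((d:ℝ) - 1)⁻¹ with hc
  have hc0 : 0 ≤ c := by positivity
  -- Jensen with uniform weights on T
  have hjensen : ∑ i ∈ T, c * Real.negMulLog (p i) ≤ Real.negMulLog (∑ i ∈ T, c * p i) :=
    sum_mul_negMulLog_le T (fun _ => c) p (fun _ _ => hc0)
      (by rw [Finset.sum_const, nsmul_eq_mul, hcard, hc]; field_simp)
      (fun i _ => hp0 i)
  have hsum2 : ∑ i ∈ T, c * p i = e * c := by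
    rw [← Finset.mul_sum, hesum]; ring
  rw [hsum2, ← Finset.mul_sum] at hjensen
  -- so ∑_T negMulLog (p i) ≤ (d-1) * negMulLog (e * c)
  have hstep : ∑ i ∈ T, Real.negMulLog (p i) ≤ ((d:ℝ)-1) * Real.negMulLog (e * c) := by
    have h2 := mul_le_mul_of_nonneg_left hjensen (le_of_lt hd1)
    have h3 : ((d:ℝ)-1) * (c * ∑ i ∈ T, Real.negMulLog (p i)) = ∑ i ∈ T, Real.negMulLog (p i) := by
      rw [← mul_assoc, hc, mul_inv_cancel₀ (ne_of_gt hd1), one_mul]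
    linarith
  have hmul : ((d:ℝ)-1) * Real.negMulLog (e * c) =
      Real.negMulLog e + e * Real.log ((d:ℝ)-1) := by
    rw [Real.negMulLog_mul]
    have hlogc : Real.negMulLog c = c * Real.log ((d:ℝ)-1) := by
      rw [Real.negMulLog, hc, Real.log_inv]; ring
    rw [hlogc, hc]
    have hne : ((d:ℝ) - 1) ≠ 0 := ne_of_gt hd1
    field_simp
    try ring
  -- assemble
  have htotal : ∑ i, Real.negMulLog (p i)
      = Real.negMulLog (p j) + ∑ i ∈ T, Real.negMulLog (p i) := by
    rw [hT, ← Finset.add_sum_erase Finset.univ (fun i => Real.negMulLog (p i)) (Finset.mem_univ j)]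
  rw [htotal]
  have hbin : Real.binEntropy e = Real.negMulLog e + Real.negMulLog (1 - e) := by
    rw [Real.binEntropy_eq_negMulLog_add_negMulLog_one_sub]
  have h1e : 1 - e = p j := by rw [he]; ring
  rw [Real.qaryEntropy]
  have hcast : Real.log ((d:ℤ) - 1 : ℤ) = Real.log ((d:ℝ) - 1) := by
    norm_cast
  calc Real.negMulLog (p j) + ∑ i ∈ T, Real.negMulLog (p i)
      ≤ Real.negMulLog (p j) + (Real.negMulLog e + e * Real.log ((d:ℝ)-1)) := by
        rw [← hmul]; linarith [hstep]
    _ = e * Real.log ((d:ℝ) - 1) + Real.binEntropy e := by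
        rw [hbin, h1e]; ring
    _ = e * Real.log ((d:ℤ) - 1 : ℤ) + Real.binEntropy e := by rw [hcast]



lemma classical_FA (d : ℕ) (hd : 2 ≤ d) (p q : Fin d → ℝ)
    (hp0 : ∀ i, 0 ≤ p i) (hq0 : ∀ i, 0 ≤ q i)
    (hp1 : ∑ i, p i = 1) (hq1 : ∑ i, q i = 1) :
    ∑ i, Real.negMulLog (p i) - ∑ i, Real.negMulLog (q i)
      ≤ Real.qaryEntropy d ((1/2) * ∑ i, |p i - q i|) := by
  set δ : ℝ := (1/2) * ∑ i, |p i - q i| with hδ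
  have hδ0 : 0 ≤ δ := by positivity
  rcases eq_or_lt_of_le hδ0 with h0 | hδpos
  · -- δ = 0 : p = q
    have hz : ∑ i, |p i - q i| = 0 := by
      have h2 : (2:ℝ) * δ = ∑ i, |p i - q i| := by rw [hδ]; ring
      rw [← h2, ← h0]; ring
    have hpq : ∀ i, p i = q i := by
      intro i
      have h1 := Finset.sum_eq_zero_iff_of_nonneg
        (fun i (_ : i ∈ Finset.univ) => abs_nonneg (p i - q i)) |>.mp hz i (Finset.mem_univ i)
      have := abs_eq_zero.mp h1
      linarith
    have heq : ∑ i, Real.negMulLog (p i) = ∑ i, Real.negMulLog (q i) := by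
      apply Finset.sum_congr rfl; intro i _; rw [hpq i]
    rw [heq, ← h0]
    simp [Real.qaryEntropy_zero]
  · set m : Fin d → ℝ := fun i => min (p i) (q i) with hm
    set a : Fin d → ℝ := fun i => p i - m i with ha
    set b : Fin d → ℝ := fun i => q i - m i with hb
    have ham : ∀ i, a i = p i - m i := fun _ => rfl
    have hbm : ∀ i, b i = q i - m i := fun _ => rfl
    have hmm : ∀ i, m i = min (p i) (q i) := fun _ => rfl
    have ha0 : ∀ i, 0 ≤ a i := fun i => by
      rw [ham, hmm]; have := min_le_left (p i) (q i); linarith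
    have hb0 : ∀ i, 0 ≤ b i := fun i => by
      rw [hbm, hmm]; have := min_le_right (p i) (q i); linarith
    have hab : ∀ i, a i * b i = 0 := by
      intro i
      rcases le_total (p i) (q i) with h | h
      · have hz : a i = 0 := by rw [ham, hmm, min_eq_left h]; ring
        rw [hz]; ring
      · have hz : b i = 0 := by rw [hbm, hmm, min_eq_right h]; ring
        rw [hz]; ring
    have habs : ∀ i, a i + b i = |p i - q i| := by
      intro i
      have h1 : max (p i) (q i) + min (p i) (q i) = p i + q i := max_add_min _ _
      have h2 := max_sub_min_eq_abs (p i) (q i)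
      rw [abs_sub_comm] at h2
      rw [ham, hbm, hmm]
      linarith
    have hsumab : ∑ i, a i + ∑ i, b i = 2 * δ := by
      rw [← Finset.sum_add_distrib, Finset.sum_congr rfl (fun i _ => habs i), hδ]; ring
    have hsumaeqb : ∑ i, a i = ∑ i, b i := by
      have h1 : ∑ i, a i = 1 - ∑ i, m i := by
        rw [Finset.sum_congr rfl (fun i _ => ham i), Finset.sum_sub_distrib, hp1]
      have h2 : ∑ i, b i = 1 - ∑ i, m i := by
        rw [Finset.sum_congr rfl (fun i _ => hbm i), Finset.sum_sub_distrib, hq1]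
      rw [h1, h2]
    have hsuma : ∑ i, a i = δ := by linarith
    have hsumb : ∑ i, b i = δ := by linarith
    set w : Fin d → Fin d → ℝ := fun x y => (if x = y then m x else 0) + a x * b y / δ with hw
    have hwd : ∀ x y, w x y = (if x = y then m x else 0) + a x * b y / δ := fun _ _ => rfl
    have hm0 : ∀ i, 0 ≤ m i := fun i => le_min (hp0 i) (hq0 i)
    have hw0 : ∀ x y, 0 ≤ w x y := by
      intro x y
      rw [hwd]
      have h1 : 0 ≤ (if x = y then m x else 0) := by split <;> simp [hm0]
      have h2 : 0 ≤ a x * b y / δ := div_nonneg (mul_nonneg (ha0 x) (hb0 y)) hδ0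
      linarith
    have hrow : ∀ x, ∑ y, w x y = p x := by
      intro x
      rw [Finset.sum_congr rfl (fun y _ => hwd x y), Finset.sum_add_distrib,
        Finset.sum_ite_eq Finset.univ x (fun _ => m x)]
      simp only [Finset.mem_univ, if_true]
      have h3 : ∑ y, a x * b y / δ = a x := by
        rw [← Finset.sum_div, ← Finset.mul_sum, hsumb]
        field_simp
      rw [h3, ham]
      ring
    have hcol : ∀ y, ∑ x, w x y = q y := by
      intro y
      rw [Finset.sum_congr rfl (fun x _ => hwd x y), Finset.sum_add_distrib]
      have h1 : ∑ x, (if x = y then m x else 0) = m y := by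
        rw [Finset.sum_ite_eq' Finset.univ y (fun x => m x)]
        simp only [Finset.mem_univ, if_true]
      have h2 : ∑ x, a x * b y / δ = b y := by
        rw [← Finset.sum_div, ← Finset.sum_mul, hsuma]
        field_simp
        try ring
      rw [h1, h2, hbm]; ring
    have hdiag : ∀ y, w y y = m y := by
      intro y
      rw [hwd, if_pos rfl, hab y]; ring
    set L : ℝ := Real.log ((d:ℤ) - 1 : ℤ) with hL
    set E : Fin d → ℝ := fun y => if q y = 0 then 0 else b y / q y with hE
    have hEd : ∀ y, E y = if q y = 0 then 0 else b y / q y := fun _ => rfl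
    -- step 1
    have step1 : ∑ x, Real.negMulLog (p x) ≤ ∑ x, ∑ y, Real.negMulLog (w x y) := by
      apply Finset.sum_le_sum
      intro x _
      rw [← hrow x]
      exact negMulLog_sum_le _ _ (fun y _ => hw0 x y)
    -- step 2
    have step2 : ∀ y, ∑ x, Real.negMulLog (w x y)
        ≤ Real.negMulLog (q y) + q y * Real.qaryEntropy d (E y) := by
      intro y
      rcases eq_or_lt_of_le (hq0 y) with hq | hq
      · have hwz : ∀ x, w x y = 0 := by
          intro x
          have hs : ∑ x, w x y = 0 := by rw [hcol y, ← hq]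
          exact (Finset.sum_eq_zero_iff_of_nonneg
            (fun x _ => hw0 x y)).mp hs x (Finset.mem_univ x)
        have hz : ∑ x, Real.negMulLog (w x y) = 0 := by
          apply Finset.sum_eq_zero; intro x _; rw [hwz x]; simp
        rw [hz, ← hq]; simp
      · have hqne : q y ≠ 0 := ne_of_gt hq
        set r : Fin d → ℝ := fun x => w x y / q y with hrdef
        have hrd : ∀ x, r x = w x y / q y := fun _ => rfl
        have hr0 : ∀ x, 0 ≤ r x := fun x => by
          rw [hrd]; exact div_nonneg (hw0 x y) (le_of_lt hq)
        have hr1 : ∑ x, r x = 1 := by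
          rw [Finset.sum_congr rfl (fun x _ => hrd x), ← Finset.sum_div, hcol y]
          field_simp
        have hry : 1 - r y = E y := by
          have h1 : r y = m y / q y := by rw [hrd, hdiag y]
          rw [h1, hEd, if_neg hqne, hbm]
          field_simp
        have hwr : ∀ x, w x y = q y * r x := by
          intro x; rw [hrd]; field_simp
        have hexp : ∑ x, Real.negMulLog (w x y)
            = Real.negMulLog (q y) + q y * ∑ x, Real.negMulLog (r x) := by
          have h4 : ∀ x, Real.negMulLog (w x y)
              = r x * Real.negMulLog (q y) + q y * Real.negMulLog (r x) := by
            intro x; rw [hwr x, Real.negMulLog_mul]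
          rw [Finset.sum_congr rfl (fun x _ => h4 x), Finset.sum_add_distrib,
            ← Finset.sum_mul, hr1, ← Finset.mul_sum, one_mul]
        rw [hexp]
        have hgr := entropy_grouping d hd r hr0 hr1 y
        rw [hry] at hgr
        have := mul_le_mul_of_nonneg_left hgr (le_of_lt hq)
        linarith
    -- combine
    have step3 : ∑ x, Real.negMulLog (p x)
        ≤ ∑ y, Real.negMulLog (q y) + ∑ y, q y * Real.qaryEntropy d (E y) := by
      calc ∑ x, Real.negMulLog (p x) ≤ ∑ x, ∑ y, Real.negMulLog (w x y) := step1
        _ = ∑ y, ∑ x, Real.negMulLog (w x y) := Finset.sum_comm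
        _ ≤ ∑ y, (Real.negMulLog (q y) + q y * Real.qaryEntropy d (E y)) :=
            Finset.sum_le_sum (fun y _ => step2 y)
        _ = ∑ y, Real.negMulLog (q y) + ∑ y, q y * Real.qaryEntropy d (E y) :=
            Finset.sum_add_distrib
    -- step 4
    have hble : ∀ y, b y ≤ q y := by
      intro y; rw [hbm]; have := hm0 y; linarith
    have hqE : ∀ y, q y * E y = b y := by
      intro y
      rw [hEd]
      by_cases hq : q y = 0
      · rw [if_pos hq]
        have h1 : b y ≤ q y := hble y
        have h2 := hb0 y
        rw [hq] at h1
        rw [hq]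
        linarith
      · rw [if_neg hq]; field_simp
    have hsumqE : ∑ y, q y * E y = δ := by
      rw [Finset.sum_congr rfl (fun y _ => hqE y), hsumb]
    have hE01 : ∀ y, E y ∈ Set.Icc (0:ℝ) 1 := by
      intro y
      rw [hEd]
      by_cases hq : q y = 0
      · rw [if_pos hq]; exact ⟨le_refl 0, by norm_num⟩
      · rw [if_neg hq]
        have hqpos : 0 < q y := lt_of_le_of_ne (hq0 y) (Ne.symm hq)
        constructor
        · exact div_nonneg (hb0 y) (le_of_lt hqpos)
        · rw [div_le_one hqpos]; exact hble y
    have step4 : ∑ y, q y * Real.qaryEntropy d (E y) ≤ Real.qaryEntropy d δ := by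
      have hexp : ∀ y, q y * Real.qaryEntropy d (E y)
          = q y * E y * L + q y * Real.binEntropy (E y) := by
        intro y; rw [Real.qaryEntropy, hL]; ring
      rw [Finset.sum_congr rfl (fun y _ => hexp y), Finset.sum_add_distrib]
      have h1 : ∑ y, q y * E y * L = δ * L := by
        rw [← Finset.sum_mul, hsumqE]
      have h2 : ∑ y, q y * Real.binEntropy (E y) ≤ Real.binEntropy δ := by
        have h3 := sum_mul_binEntropy_le Finset.univ q E (fun i _ => hq0 i) hq1
          (fun i _ => hE01 i)
        rw [hsumqE] at h3
        exact h3
      rw [h1, Real.qaryEntropy, hL]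
      linarith
    linarith



-- doubly stochastic mixing increases entropy
lemma dstoch_entropy (d : ℕ) (D : Fin d → Fin d → ℝ) (lam : Fin d → ℝ)
    (hD0 : ∀ i k, 0 ≤ D i k) (hDrow : ∀ i, ∑ k, D i k = 1) (hDcol : ∀ k, ∑ i, D i k = 1)
    (hlam : ∀ k, 0 ≤ lam k) :
    ∑ k, Real.negMulLog (lam k) ≤ ∑ i, Real.negMulLog (∑ k, D i k * lam k) := by
  have h1 : ∀ i, ∑ k, D i k * Real.negMulLog (lam k)
      ≤ Real.negMulLog (∑ k, D i k * lam k) := fun i =>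
    sum_mul_negMulLog_le Finset.univ (D i) lam (fun k _ => hD0 i k) (hDrow i)
      (fun k _ => hlam k)
  have h2 : ∑ i, ∑ k, D i k * Real.negMulLog (lam k) = ∑ k, Real.negMulLog (lam k) := by
    rw [Finset.sum_comm]
    apply Finset.sum_congr rfl
    intro k _
    rw [← Finset.sum_mul, hDcol k, one_mul]
  calc ∑ k, Real.negMulLog (lam k) = ∑ i, ∑ k, D i k * Real.negMulLog (lam k) := h2.symm
    _ ≤ ∑ i, Real.negMulLog (∑ k, D i k * lam k) := Finset.sum_le_sum (fun i _ => h1 i)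

-- one-sided quantum-to-classical bound
lemma one_sided (d : ℕ) (hd : 2 ≤ d) (ε : ℝ)
    (lamr lams mu : Fin d → ℝ) (Dr Dd : Fin d → Fin d → ℝ)
    (hlamr : ∀ k, 0 ≤ lamr k) (hlams : ∀ k, 0 ≤ lams k)
    (hsumr : ∑ k, lamr k = 1) (hsums : ∑ k, lams k = 1)
    (hDr0 : ∀ i k, 0 ≤ Dr i k) (hDrrow : ∀ i, ∑ k, Dr i k = 1) (hDrcol : ∀ k, ∑ i, Dr i k = 1)
    (hDd0 : ∀ i k, 0 ≤ Dd i k) (hDdrow : ∀ i, ∑ k, Dd i k = 1) (hDdcol : ∀ k, ∑ i, Dd i k = 1)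
    (hdiff : ∀ i, (∑ k, Dr i k * lamr k) - lams i = ∑ k, Dd i k * mu k)
    (hε : ε = (1/2) * ∑ k, |mu k|)
    (hmin : ∃ j, lamr j ≤ 1 - ε) :
    (∑ k, Real.negMulLog (lamr k)) - (∑ k, Real.negMulLog (lams k)) ≤ Real.qaryEntropy d ε := by
  have hε0 : 0 ≤ ε := by rw [hε]; positivity
  have hd1 : (0:ℝ) < 1 - 1/(d:ℝ) := by
    have h2 : (2:ℝ) ≤ (d:ℝ) := by exact_mod_cast hd
    have : (0:ℝ) < (d:ℝ) := by linarith
    rw [sub_pos, div_lt_one this]; linarith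
  set p : Fin d → ℝ := fun i => ∑ k, Dr i k * lamr k with hp
  have hpd : ∀ i, p i = ∑ k, Dr i k * lamr k := fun _ => rfl
  have hp0 : ∀ i, 0 ≤ p i := fun i => by
    rw [hpd]; exact Finset.sum_nonneg fun k _ => mul_nonneg (hDr0 i k) (hlamr k)
  have hp1 : ∑ i, p i = 1 := by
    rw [Finset.sum_congr rfl fun i _ => hpd i, Finset.sum_comm]
    rw [Finset.sum_congr rfl (fun k (_ : k ∈ Finset.univ) => by
      rw [← Finset.sum_mul, hDrcol k, one_mul] : ∀ k ∈ Finset.univ, ∑ i, Dr i k * lamr k = lamr k)]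
    exact hsumr
  have hent : ∑ k, Real.negMulLog (lamr k) ≤ ∑ i, Real.negMulLog (p i) :=
    dstoch_entropy d Dr lamr hDr0 hDrrow hDrcol hlamr
  set δ : ℝ := (1/2) * ∑ i, |p i - lams i| with hδd
  have hδ0 : 0 ≤ δ := by positivity
  have hδε : δ ≤ ε := by
    rw [hδd, hε]
    have h1 : ∀ i, |p i - lams i| ≤ ∑ k, Dd i k * |mu k| := by
      intro i
      rw [hpd i, hdiff i]
      calc |∑ k, Dd i k * mu k| ≤ ∑ k, |Dd i k * mu k| := Finset.abs_sum_le_sum_abs _ _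
        _ = ∑ k, Dd i k * |mu k| := Finset.sum_congr rfl fun k _ => by
            rw [abs_mul, abs_of_nonneg (hDd0 i k)]
    have h2 : ∑ i, |p i - lams i| ≤ ∑ k, |mu k| := by
      calc ∑ i, |p i - lams i| ≤ ∑ i, ∑ k, Dd i k * |mu k| :=
            Finset.sum_le_sum fun i _ => h1 i
        _ = ∑ k, |mu k| := by
            rw [Finset.sum_comm]
            apply Finset.sum_congr rfl
            intro k _
            rw [← Finset.sum_mul, hDdcol k, one_mul]
    linarith
  have hFA : ∑ i, Real.negMulLog (p i) - ∑ i, Real.negMulLog (lams i)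
      ≤ Real.qaryEntropy d δ := classical_FA d hd p lams hp0 hlams hp1 hsums
  rcases le_or_gt ε (1 - 1/(d:ℝ)) with hcase | hcase
  · -- monotone case
    have hmono : Real.qaryEntropy d δ ≤ Real.qaryEntropy d ε := by
      rcases eq_or_lt_of_le hδε with he | he
      · rw [he]
      · exact le_of_lt ((Real.qaryEntropy_strictMonoOn hd)
          ⟨hδ0, le_trans hδε hcase⟩ ⟨hε0, hcase⟩ he)
    linarith
  · -- antitone case: use hmin and nonnegativity of entropy of lams
    obtain ⟨j, hj⟩ := hmin
    have hlams1 : ∀ k, lams k ≤ 1 := by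
      intro k
      have := Finset.single_le_sum (fun k (_ : k ∈ Finset.univ) => hlams k) (Finset.mem_univ k)
      rw [hsums] at this; exact this
    have hSnn : 0 ≤ ∑ k, Real.negMulLog (lams k) :=
      Finset.sum_nonneg fun k _ => Real.negMulLog_nonneg (hlams k) (hlams1 k)
    have hgr := entropy_grouping d hd lamr hlamr hsumr j
    have hlamr1 : lamr j ≤ 1 := by
      have := Finset.single_le_sum (fun k (_ : k ∈ Finset.univ) => hlamr k) (Finset.mem_univ j)
      rw [hsumr] at this; exact this
    have hanti : Real.qaryEntropy d (1 - lamr j) ≤ Real.qaryEntropy d ε := by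
      have hεmem : ε ∈ Set.Icc (1 - 1/(d:ℝ)) 1 := ⟨le_of_lt hcase, by linarith [hlamr j]⟩
      have hmem : (1 - lamr j) ∈ Set.Icc (1 - 1/(d:ℝ)) 1 :=
        ⟨by linarith, by linarith [hlamr j]⟩
      rcases eq_or_lt_of_le (by linarith : ε ≤ 1 - lamr j) with he | he
      · rw [← he]
      · exact le_of_lt ((Real.qaryEntropy_strictAntiOn hd) hεmem hmem he)
    linarith



-- existence of a small eigenvalue in the large-ε case
lemma exists_le_one_sub (d : ℕ) (hd : 0 < d) (ε : ℝ) (lam mu c c' : Fin d → ℝ)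
    (Dc : Fin d → Fin d → ℝ)
    (hlam0 : ∀ t, 0 ≤ lam t)
    (hc : ∀ k, c k = ∑ t, Dc k t * lam t)
    (hDc0 : ∀ k t, 0 ≤ Dc k t) (hDcrow : ∀ k, ∑ t, Dc k t = 1)
    (hc'0 : ∀ k, 0 ≤ c' k) (hcsum : ∑ k, c k = 1)
    (hmu : ∀ k, mu k = c k - c' k) (hmusum : ∑ k, mu k = 0)
    (hε : ε = (1/2) * ∑ k, |mu k|) :
    ∃ t, lam t ≤ 1 - ε := by
  haveI : Nonempty (Fin d) := ⟨⟨0, hd⟩⟩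
  have hc0 : ∀ k, 0 ≤ c k := fun k => by
    rw [hc]; exact Finset.sum_nonneg fun t _ => mul_nonneg (hDc0 k t) (hlam0 t)
  -- exists j0 with mu j0 ≤ 0
  obtain ⟨j0, hj0⟩ : ∃ j0, mu j0 ≤ 0 := by
    by_contra h
    push_neg at h
    have : 0 < ∑ k, mu k := Finset.sum_pos (fun k _ => h k) Finset.univ_nonempty
    rw [hmusum] at this; exact lt_irrefl 0 this
  -- ε = ∑ max (mu k) 0
  have hmax : ε = ∑ k, max (mu k) 0 := by
    have h1 : ∀ k, max (mu k) 0 = (mu k + |mu k|) / 2 := fun k => by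
      rcases le_or_gt 0 (mu k) with h | h
      · rw [max_eq_left h, abs_of_nonneg h]; ring
      · rw [max_eq_right (le_of_lt h), abs_of_neg h]; ring
    rw [Finset.sum_congr rfl fun k _ => h1 k]
    rw [← Finset.sum_div, Finset.sum_add_distrib, hmusum, hε]
    ring
  -- ε ≤ 1 - c j0
  have hbound : ε ≤ 1 - c j0 := by
    have h1 : ∀ k, max (mu k) 0 ≤ (if k = j0 then 0 else c k) := by
      intro k
      by_cases hk : k = j0
      · rw [if_pos hk, hk]
        exact max_le hj0 (le_refl 0)
      · rw [if_neg hk]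
        apply max_le
        · rw [hmu k]; have := hc'0 k; linarith
        · exact hc0 k
    have h2 : ∑ k, (if k = j0 then (0:ℝ) else c k) = 1 - c j0 := by
      have h3 : ∑ k, (if k = j0 then (0:ℝ) else c k)
          = ∑ k, (c k - if k = j0 then c k else 0) := by
        apply Finset.sum_congr rfl; intro k _
        by_cases hk : k = j0 <;> simp [hk]
      rw [h3, Finset.sum_sub_distrib, hcsum,
        Finset.sum_ite_eq' Finset.univ j0 (fun k => c k)]
      simp
    rw [hmax, ← h2]
    exact Finset.sum_le_sum fun k _ => h1 k
  -- minimal lam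
  obtain ⟨t0, _, ht0⟩ := Finset.exists_min_image Finset.univ lam Finset.univ_nonempty
  refine ⟨t0, ?_⟩
  have hle : lam t0 ≤ c j0 := by
    rw [hc]
    calc lam t0 = ∑ t, Dc j0 t * lam t0 := by rw [← Finset.sum_mul, hDcrow, one_mul]
      _ ≤ ∑ t, Dc j0 t * lam t := Finset.sum_le_sum fun t _ =>
          mul_le_mul_of_nonneg_left (ht0 t (Finset.mem_univ t)) (hDc0 j0 t)
  linarith




lemma conj_diag_entry (N : Matrix (Fin d) (Fin d) ℂ) (μ : Fin d → ℝ) (i : Fin d) :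
    (N * Matrix.diagonal (fun k => (μ k : ℂ)) * Nᴴ) i i
      = ((∑ k, Complex.normSq (N i k) * μ k : ℝ) : ℂ) := by
  rw [Matrix.mul_apply]
  push_cast
  apply Finset.sum_congr rfl
  intro k _
  rw [Matrix.mul_diagonal, Matrix.conjTranspose_apply]
  have : N i k * star (N i k) = (Complex.normSq (N i k) : ℂ) := Complex.mul_conj (N i k)
  calc N i k * (μ k : ℂ) * star (N i k) = N i k * star (N i k) * (μ k : ℂ) := by ring
    _ = (Complex.normSq (N i k) : ℂ) * (μ k : ℂ) := by rw [this]

lemma unitary_rowsum (N : Matrix (Fin d) (Fin d) ℂ) (hN : N ∈ Matrix.unitaryGroup (Fin d) ℂ)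
    (i : Fin d) : ∑ k, Complex.normSq (N i k) = 1 := by
  have h := Matrix.mem_unitaryGroup_iff.mp hN
  have h2 : (N * star N) i i = (1 : Matrix (Fin d) (Fin d) ℂ) i i := by rw [h]
  rw [Matrix.one_apply_eq, Matrix.mul_apply] at h2
  have h3 : ∑ k, ((Complex.normSq (N i k) : ℂ)) = 1 := by
    rw [← h2]
    apply Finset.sum_congr rfl
    intro k _
    rw [Matrix.star_eq_conjTranspose, Matrix.conjTranspose_apply, Complex.star_def, Complex.mul_conj]
  have h4 : ((∑ k, Complex.normSq (N i k) : ℝ) : ℂ) = ((1:ℝ):ℂ) := by push_cast; rw [h3]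
  exact_mod_cast h4

lemma unitary_colsum (N : Matrix (Fin d) (Fin d) ℂ) (hN : N ∈ Matrix.unitaryGroup (Fin d) ℂ)
    (k : Fin d) : ∑ i, Complex.normSq (N i k) = 1 := by
  have h := Matrix.mem_unitaryGroup_iff'.mp hN
  have h2 : (star N * N) k k = (1 : Matrix (Fin d) (Fin d) ℂ) k k := by rw [h]
  rw [Matrix.one_apply_eq, Matrix.mul_apply] at h2
  have h3 : ∑ i, ((Complex.normSq (N i k) : ℂ)) = 1 := by
    rw [← h2]
    apply Finset.sum_congr rfl
    intro i _
    rw [Matrix.star_eq_conjTranspose, Matrix.conjTranspose_apply, mul_comm, Complex.star_def, Complex.mul_conj]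
  have h4 : ((∑ i, Complex.normSq (N i k) : ℝ) : ℂ) = ((1:ℝ):ℂ) := by push_cast; rw [h3]
  exact_mod_cast h4

-- trace equals sum of eigenvalues
lemma trace_eq_sum_eigenvalues (A : Matrix (Fin d) (Fin d) ℂ) (hA : A.IsHermitian) :
    A.trace = ((∑ i, hA.eigenvalues i : ℝ) : ℂ) := by
  conv_lhs => rw [hA.spectral_theorem, Unitary.conjStarAlgAut_apply]
  rw [Matrix.trace_mul_cycle]
  have h1 : star (hA.eigenvectorUnitary : Matrix (Fin d) (Fin d) ℂ)
      * (hA.eigenvectorUnitary : Matrix (Fin d) (Fin d) ℂ) = 1 :=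
    Unitary.coe_star_mul_self hA.eigenvectorUnitary
  rw [h1, one_mul, Matrix.trace_diagonal]
  push_cast
  rfl




lemma conj_spectral (A : Matrix (Fin d) (Fin d) ℂ) (hA : A.IsHermitian)
    (V : Matrix (Fin d) (Fin d) ℂ) :
    star V * A * V = (star V * (hA.eigenvectorUnitary : Matrix (Fin d) (Fin d) ℂ))
      * Matrix.diagonal (fun k => (hA.eigenvalues k : ℂ))
      * star (star V * (hA.eigenvectorUnitary : Matrix (Fin d) (Fin d) ℂ)) := by
  have hdiag : Matrix.diagonal (fun k => (hA.eigenvalues k : ℂ))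
      = Matrix.diagonal (RCLike.ofReal ∘ hA.eigenvalues) := rfl
  conv_lhs => rw [hA.spectral_theorem, Unitary.conjStarAlgAut_apply]
  rw [hdiag, StarMul.star_mul, star_star]
  simp only [Matrix.mul_assoc]

lemma star_mul_mem_unitary (X Y : Matrix.unitaryGroup (Fin d) ℂ) :
    star (X : Matrix (Fin d) (Fin d) ℂ) * (Y : Matrix (Fin d) (Fin d) ℂ)
      ∈ Matrix.unitaryGroup (Fin d) ℂ :=
  mul_mem (Unitary.star_mem X.2) Y.2

lemma conj_diag_hermitian (A : Matrix (Fin d) (Fin d) ℂ) (hA : A.IsHermitian) :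
    star (hA.eigenvectorUnitary : Matrix (Fin d) (Fin d) ℂ) * A
      * (hA.eigenvectorUnitary : Matrix (Fin d) (Fin d) ℂ)
      = Matrix.diagonal (fun k => (hA.eigenvalues k : ℂ)) :=
  by
    have := hA.conjStarAlgAut_star_eigenvectorUnitary
    rw [Unitary.conjStarAlgAut_apply] at this
    simpa [Function.comp_def] using this

lemma mix_sum (D : Fin d → Fin d → ℝ) (lam : Fin d → ℝ) (hDcol : ∀ k, ∑ i, D i k = 1) :
    ∑ i, ∑ k, D i k * lam k = ∑ k, lam k := by
  rw [Finset.sum_comm]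
  apply Finset.sum_congr rfl
  intro k _
  rw [← Finset.sum_mul, hDcol k, one_mul]

lemma diag_in_basis (A : Matrix (Fin d) (Fin d) ℂ) (hA : A.IsHermitian)
    (V : Matrix (Fin d) (Fin d) ℂ) (i : Fin d) :
    (star V * A * V) i i
      = ((∑ k, Complex.normSq ((star V * (hA.eigenvectorUnitary : Matrix (Fin d) (Fin d) ℂ)) i k)
          * hA.eigenvalues k : ℝ) : ℂ) := by
  rw [conj_spectral A hA V]
  simp only [Matrix.star_eq_conjTranspose]
  rw [conj_diag_entry]

end AudenaertHelpers

theorem audenaert_vonNeumann_bound (d : ℕ) (hd : 2 ≤ d)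
    (ρ σ : Matrix (Fin d) (Fin d) ℂ)
    (hρ : ρ.PosSemidef) (hσ : σ.PosSemidef)
    (hρtr : ρ.trace = 1) (hσtr : σ.trace = 1)
    (ε : ℝ)
    (hε : ε = (1/2) * ∑ i, |(hρ.isHermitian.sub hσ.isHermitian).eigenvalues i|) :
    |(-∑ i, hρ.isHermitian.eigenvalues i * Real.logb 2 (hρ.isHermitian.eigenvalues i)) -
      (-∑ i, hσ.isHermitian.eigenvalues i * Real.logb 2 (hσ.isHermitian.eigenvalues i))| ≤
      (-ε * Real.logb 2 ε - (1 - ε) * Real.logb 2 (1 - ε)) + ε * Real.logb 2 ((d : ℝ) - 1) := by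
  have hlog2 : (0:ℝ) < Real.log 2 := Real.log_pos (by norm_num)
  have hΔH : (ρ - σ).IsHermitian := hρ.isHermitian.sub hσ.isHermitian
  -- eigenvalue vectors
  set lamr : Fin d → ℝ := hρ.isHermitian.eigenvalues with hlamr_def
  set lams : Fin d → ℝ := hσ.isHermitian.eigenvalues with hlams_def
  set mu : Fin d → ℝ := (hρ.isHermitian.sub hσ.isHermitian).eigenvalues with hmu_def
  have hlamr0 : ∀ k, 0 ≤ lamr k := fun k => hρ.eigenvalues_nonneg k
  have hlams0 : ∀ k, 0 ≤ lams k := fun k => hσ.eigenvalues_nonneg k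
  have hsumr : ∑ k, lamr k = 1 := by
    have h := trace_eq_sum_eigenvalues ρ hρ.isHermitian
    rw [hρtr] at h
    exact_mod_cast h.symm
  have hsums : ∑ k, lams k = 1 := by
    have h := trace_eq_sum_eigenvalues σ hσ.isHermitian
    rw [hσtr] at h
    exact_mod_cast h.symm
  have hmusum : ∑ k, mu k = 0 := by
    have h := trace_eq_sum_eigenvalues (ρ - σ) (hρ.isHermitian.sub hσ.isHermitian)
    rw [Matrix.trace_sub, hρtr, hσtr, sub_self] at h
    exact_mod_cast h.symm
  -- unitaries
  set Um : Matrix (Fin d) (Fin d) ℂ :=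
    (hρ.isHermitian.eigenvectorUnitary : Matrix (Fin d) (Fin d) ℂ) with hUm_def
  set Vm : Matrix (Fin d) (Fin d) ℂ :=
    (hσ.isHermitian.eigenvectorUnitary : Matrix (Fin d) (Fin d) ℂ) with hVm_def
  set Wm : Matrix (Fin d) (Fin d) ℂ :=
    ((hρ.isHermitian.sub hσ.isHermitian).eigenvectorUnitary : Matrix (Fin d) (Fin d) ℂ)
    with hWm_def
  -- doubly stochastic matrices
  have hmemVU : star Vm * Um ∈ Matrix.unitaryGroup (Fin d) ℂ :=
    star_mul_mem_unitary hσ.isHermitian.eigenvectorUnitary hρ.isHermitian.eigenvectorUnitary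
  have hmemVW : star Vm * Wm ∈ Matrix.unitaryGroup (Fin d) ℂ :=
    star_mul_mem_unitary hσ.isHermitian.eigenvectorUnitary
      (hρ.isHermitian.sub hσ.isHermitian).eigenvectorUnitary
  have hmemUV : star Um * Vm ∈ Matrix.unitaryGroup (Fin d) ℂ :=
    star_mul_mem_unitary hρ.isHermitian.eigenvectorUnitary hσ.isHermitian.eigenvectorUnitary
  have hmemUW : star Um * Wm ∈ Matrix.unitaryGroup (Fin d) ℂ :=
    star_mul_mem_unitary hρ.isHermitian.eigenvectorUnitary
      (hρ.isHermitian.sub hσ.isHermitian).eigenvectorUnitary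
  have hmemWU : star Wm * Um ∈ Matrix.unitaryGroup (Fin d) ℂ :=
    star_mul_mem_unitary (hρ.isHermitian.sub hσ.isHermitian).eigenvectorUnitary
      hρ.isHermitian.eigenvectorUnitary
  have hmemWV : star Wm * Vm ∈ Matrix.unitaryGroup (Fin d) ℂ :=
    star_mul_mem_unitary (hρ.isHermitian.sub hσ.isHermitian).eigenvectorUnitary
      hσ.isHermitian.eigenvectorUnitary
  -- the two key difference identities (entries)
  -- direction 1: in σ's eigenbasis
  have hdiff1 : ∀ i, (∑ k, Complex.normSq ((star Vm * Um) i k) * lamr k) - lams i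
      = ∑ k, Complex.normSq ((star Vm * Wm) i k) * mu k := by
    intro i
    have hmat : star Vm * ρ * Vm - star Vm * σ * Vm = star Vm * (ρ - σ) * Vm := by
      rw [Matrix.mul_sub, Matrix.sub_mul]
    have h := congrFun (congrFun hmat i) i
    rw [Matrix.sub_apply] at h
    rw [diag_in_basis ρ hρ.isHermitian Vm i,
      diag_in_basis (ρ - σ) (hρ.isHermitian.sub hσ.isHermitian) Vm i] at h
    rw [hVm_def, conj_diag_hermitian σ hσ.isHermitian, Matrix.diagonal_apply_eq] at h
    rw [← Complex.ofReal_sub] at h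
    exact_mod_cast h
  -- direction 2: in ρ's eigenbasis
  have hdiff2 : ∀ i, (∑ k, Complex.normSq ((star Um * Vm) i k) * lams k) - lamr i
      = ∑ k, Complex.normSq ((star Um * Wm) i k) * (- mu k) := by
    intro i
    have hmat : star Um * σ * Um - star Um * ρ * Um = -(star Um * (ρ - σ) * Um) := by
      rw [Matrix.mul_sub, Matrix.sub_mul, neg_sub]
    have h := congrFun (congrFun hmat i) i
    rw [Matrix.sub_apply, Matrix.neg_apply] at h
    rw [diag_in_basis σ hσ.isHermitian Um i,
      diag_in_basis (ρ - σ) (hρ.isHermitian.sub hσ.isHermitian) Um i] at h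
    rw [hUm_def, conj_diag_hermitian ρ hρ.isHermitian, Matrix.diagonal_apply_eq] at h
    rw [← Complex.ofReal_sub, ← Complex.ofReal_neg] at h
    have h2 : (∑ k, Complex.normSq ((star Um * Vm) i k) * lams k) - lamr i
        = -∑ k, Complex.normSq ((star Um * Wm) i k) * mu k := by exact_mod_cast h
    rw [h2, ← Finset.sum_neg_distrib]
    apply Finset.sum_congr rfl
    intro k _
    ring
  -- diagonal of ρ and σ in Δ's eigenbasis
  have hmuc : ∀ k, mu k = (∑ t, Complex.normSq ((star Wm * Um) k t) * lamr t)
      - ∑ t, Complex.normSq ((star Wm * Vm) k t) * lams t := by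
    intro k
    have hmat : star Wm * ρ * Wm - star Wm * σ * Wm = star Wm * (ρ - σ) * Wm := by
      rw [Matrix.mul_sub, Matrix.sub_mul]
    have h := congrFun (congrFun hmat k) k
    rw [Matrix.sub_apply] at h
    rw [diag_in_basis ρ hρ.isHermitian Wm k, diag_in_basis σ hσ.isHermitian Wm k] at h
    rw [hWm_def, conj_diag_hermitian (ρ - σ) (hρ.isHermitian.sub hσ.isHermitian),
      Matrix.diagonal_apply_eq] at h
    rw [← Complex.ofReal_sub] at h
    exact_mod_cast h.symm
  -- small eigenvalue existence
  have hd0 : 0 < d := by omega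
  have hminr : ∃ t, lamr t ≤ 1 - ε :=
    exists_le_one_sub d hd0 ε lamr mu
      (fun k => ∑ t, Complex.normSq ((star Wm * Um) k t) * lamr t)
      (fun k => ∑ t, Complex.normSq ((star Wm * Vm) k t) * lams t)
      (fun k t => Complex.normSq ((star Wm * Um) k t))
      hlamr0 (fun k => rfl)
      (fun k t => Complex.normSq_nonneg _)
      (fun k => unitary_rowsum _ hmemWU k)
      (fun k => Finset.sum_nonneg fun t _ =>
        mul_nonneg (Complex.normSq_nonneg _) (hlams0 t))
      (by rw [mix_sum _ lamr (fun t => unitary_colsum _ hmemWU t), hsumr])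
      hmuc hmusum hε
  have hmins : ∃ t, lams t ≤ 1 - ε := by
    apply exists_le_one_sub d hd0 ε lams (fun k => - mu k)
      (fun k => ∑ t, Complex.normSq ((star Wm * Vm) k t) * lams t)
      (fun k => ∑ t, Complex.normSq ((star Wm * Um) k t) * lamr t)
      (fun k t => Complex.normSq ((star Wm * Vm) k t))
      hlams0 (fun k => rfl)
      (fun k t => Complex.normSq_nonneg _)
      (fun k => unitary_rowsum _ hmemWV k)
      (fun k => Finset.sum_nonneg fun t _ =>
        mul_nonneg (Complex.normSq_nonneg _) (hlamr0 t))
      (by rw [mix_sum _ lams (fun t => unitary_colsum _ hmemWV t), hsums])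
      (fun k => by show -mu k = _; rw [hmuc k]; ring)
      (by show ∑ k, -mu k = 0; rw [Finset.sum_neg_distrib, hmusum]; ring)
      (by show ε = (1/2) * ∑ k, |-mu k|
          rw [hε]; congr 1; apply Finset.sum_congr rfl; intro k _; rw [abs_neg])
  -- main bound in natural log
  have hone : (∑ k, Real.negMulLog (lamr k)) - (∑ k, Real.negMulLog (lams k))
      ≤ Real.qaryEntropy d ε :=
    one_sided d hd ε lamr lams mu
      (fun i k => Complex.normSq ((star Vm * Um) i k))
      (fun i k => Complex.normSq ((star Vm * Wm) i k))
      hlamr0 hlams0 hsumr hsums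
      (fun i k => Complex.normSq_nonneg _)
      (fun i => unitary_rowsum _ hmemVU i) (fun k => unitary_colsum _ hmemVU k)
      (fun i k => Complex.normSq_nonneg _)
      (fun i => unitary_rowsum _ hmemVW i) (fun k => unitary_colsum _ hmemVW k)
      hdiff1 hε hminr
  have htwo : (∑ k, Real.negMulLog (lams k)) - (∑ k, Real.negMulLog (lamr k))
      ≤ Real.qaryEntropy d ε :=
    one_sided d hd ε lams lamr (fun k => - mu k)
      (fun i k => Complex.normSq ((star Um * Vm) i k))
      (fun i k => Complex.normSq ((star Um * Wm) i k))
      hlams0 hlamr0 hsums hsumr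
      (fun i k => Complex.normSq_nonneg _)
      (fun i => unitary_rowsum _ hmemUV i) (fun k => unitary_colsum _ hmemUV k)
      (fun i k => Complex.normSq_nonneg _)
      (fun i => unitary_rowsum _ hmemUW i) (fun k => unitary_colsum _ hmemUW k)
      hdiff2
      (by show ε = (1/2) * ∑ k, |-mu k|
          rw [hε]; congr 1; apply Finset.sum_congr rfl; intro k _; rw [abs_neg])
      hmins
  have hmain : |(∑ k, Real.negMulLog (lamr k)) - (∑ k, Real.negMulLog (lams k))|
      ≤ Real.qaryEntropy d ε := abs_sub_le_iff.mpr ⟨hone, htwo⟩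
  -- convert to logb
  have hconv : ∀ (f : Fin d → ℝ),
      (-∑ i, f i * Real.logb 2 (f i)) = (∑ i, Real.negMulLog (f i)) / Real.log 2 := by
    intro f
    rw [← Finset.sum_neg_distrib, Finset.sum_div]
    apply Finset.sum_congr rfl
    intro i _
    rw [Real.logb, Real.negMulLog]
    field_simp
  rw [hconv lamr, hconv lams]
  have hrhs : (-ε * Real.logb 2 ε - (1 - ε) * Real.logb 2 (1 - ε))
      + ε * Real.logb 2 ((d : ℝ) - 1) = Real.qaryEntropy d ε / Real.log 2 := by
    rw [Real.qaryEntropy, Real.binEntropy]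
    have hcast : (((d:ℤ) - 1 : ℤ) : ℝ) = (d : ℝ) - 1 := by push_cast; ring
    rw [hcast, Real.logb, Real.logb, Real.logb, Real.log_inv, Real.log_inv]
    field_simp
    ring
  rw [hrhs]
  rw [div_sub_div_same, abs_div, abs_of_pos hlog2]
  gcongr
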